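/- Let B be a finite quasigroupoid and K a field. The quasigroupoid magma K[B] (the free K-vector space on B₁), with unit 1 = Σ_{x∈B₀} id_B(x), product μ(a⊗b) = a•b if s_B(a) = t_B(b) and 0 otherwise, counit ε(b) = 1, coproduct δ(b) = b⊗b, and antipode λ(b) = λ_B(b), is a cocommutative weak Hopf quasigroup, with target map Π^L(b) = id_B(t_B(b)) and source map Π^R(b) = id_B(s_B(b)). -/

import Mathlib

set_option linter.unusedSectionVars false
set_option maxHeartbeats 2000000
set_option synthInstance.maxHeartbeats 1000000


/-- A quasigroupoid: objects `O`, arrows `A`, with a partial product `mul`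
(meaningful on composable pairs, i.e. when `s a = t b`) and inverse map `inv`.
All axioms involving the product are guarded by composability hypotheses. -/
structure Quasigroupoid (O : Type*) (A : Type*) where
  s : A → O
  t : A → O
  e : O → A
  inv : A → A
  mul : A → A → A
  s_e : ∀ x, s (e x) = x
  t_e : ∀ x, t (e x) = x
  e_mul : ∀ a, mul (e (t a)) a = a
  mul_e : ∀ a, mul a (e (s a)) = a
  s_mul : ∀ a b, s a = t b → s (mul a b) = s b
  t_mul : ∀ a b, s a = t b → t (mul a b) = t a
  inv_comp_left : ∀ a b, s a = t b → s (inv a) = t (mul a b)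
  inv_mul_cancel : ∀ a b, s a = t b → mul (inv a) (mul a b) = b
  comp_inv_right : ∀ a b, s a = t b → s (mul a b) = t (inv b)
  mul_inv_cancel : ∀ a b, s a = t b → mul (mul a b) (inv b) = a

open TensorProduct

noncomputable section

variable (K : Type*) [Field K] {O A1 : Type*} [Fintype O] [DecidableEq O]

/-- Basis element `b` of the quasigroupoid magma `K[B]`. -/
def gb (a : A1) : A1 →₀ K := Finsupp.single a 1

/-- The product of the quasigroupoid magma: bilinear extension of the partial
product (`a•b` when `s a = t b`, and `0` otherwise). -/
def gmul (Q : Quasigroupoid O A1) :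
    (A1 →₀ K) →ₗ[K] (A1 →₀ K) →ₗ[K] (A1 →₀ K) :=
  Finsupp.lift ((A1 →₀ K) →ₗ[K] (A1 →₀ K)) K A1 fun a =>
    Finsupp.lift (A1 →₀ K) K A1 fun b =>
      if Q.s a = Q.t b then Finsupp.single (Q.mul a b) 1 else 0

/-- The unit `1 = ∑_{x ∈ B₀} id_B(x)` of the quasigroupoid magma. -/
def gone (Q : Quasigroupoid O A1) : A1 →₀ K := ∑ x : O, Finsupp.single (Q.e x) 1

/-- The coproduct: linear extension of `δ(b) = b ⊗ b`. -/
def gdelta : (A1 →₀ K) →ₗ[K] (A1 →₀ K) ⊗[K] (A1 →₀ K) :=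
  Finsupp.lift ((A1 →₀ K) ⊗[K] (A1 →₀ K)) K A1 fun a =>
    Finsupp.single a 1 ⊗ₜ[K] Finsupp.single a 1

/-- The counit: linear extension of `ε(b) = 1`. -/
def geps : (A1 →₀ K) →ₗ[K] K := Finsupp.lift K K A1 fun _ => 1

/-- The antipode: linear extension of `λ(b) = λ_B(b)`. -/
def gS (Q : Quasigroupoid O A1) : (A1 →₀ K) →ₗ[K] (A1 →₀ K) :=
  Finsupp.lift (A1 →₀ K) K A1 fun a => Finsupp.single (Q.inv a) 1

/-- The target map: linear extension of `Π^L(b) = id_B(t_B b)`. -/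
def gPiL (Q : Quasigroupoid O A1) : (A1 →₀ K) →ₗ[K] (A1 →₀ K) :=
  Finsupp.lift (A1 →₀ K) K A1 fun a => Finsupp.single (Q.e (Q.t a)) 1

/-- The source map: linear extension of `Π^R(b) = id_B(s_B b)`. -/
def gPiR (Q : Quasigroupoid O A1) : (A1 →₀ K) →ₗ[K] (A1 →₀ K) :=
  Finsupp.lift (A1 →₀ K) K A1 fun a => Finsupp.single (Q.e (Q.s a)) 1

variable {Q : Quasigroupoid O A1}

namespace Quasigroupoid
lemma t_inv (a : A1) : Q.t (Q.inv a) = Q.s a := by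
  have h := Q.comp_inv_right (Q.e (Q.t a)) a (Q.s_e _)
  rwa [Q.e_mul, eq_comm] at h
lemma s_inv (a : A1) : Q.s (Q.inv a) = Q.t a := by
  have h := Q.inv_comp_left a (Q.e (Q.s a)) (Q.t_e _).symm
  rwa [Q.mul_e] at h
lemma mul_inv_self (a : A1) : Q.mul a (Q.inv a) = Q.e (Q.t a) := by
  have h := Q.mul_inv_cancel (Q.e (Q.t a)) a (Q.s_e _)
  rwa [Q.e_mul] at h
lemma inv_mul_self (a : A1) : Q.mul (Q.inv a) a = Q.e (Q.s a) := by
  have h := Q.inv_mul_cancel a (Q.e (Q.s a)) (Q.t_e _).symm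
  rwa [Q.mul_e] at h
lemma inv_inv (a : A1) : Q.inv (Q.inv a) = a := by
  have h := Q.inv_mul_cancel (Q.inv a) a (Q.s_inv a)
  rw [Q.inv_mul_self] at h
  have h2 : Q.s (Q.inv (Q.inv a)) = Q.s a := by rw [Q.s_inv, Q.t_inv]
  have h3 := Q.mul_e (Q.inv (Q.inv a))
  rw [h2] at h3
  rw [h3] at h
  exact h
lemma e_mul_e (x : O) : Q.mul (Q.e x) (Q.e x) = Q.e x := by
  have := Q.e_mul (Q.e x); rwa [Q.t_e] at this
end Quasigroupoid

lemma gmul_gb (a b : A1) : gmul K Q (gb K a) (gb K b) =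
    if Q.s a = Q.t b then gb K (Q.mul a b) else 0 := by
  simp [gmul, gb, Finsupp.lift_apply, Finsupp.sum_single_index]
lemma gdelta_gb (a : A1) : gdelta K (gb K a) = gb K a ⊗ₜ[K] gb K a := by
  simp [gdelta, gb, Finsupp.lift_apply, Finsupp.sum_single_index]
lemma geps_gb (a : A1) : geps K (gb K a) = 1 := by
  simp [geps, gb, Finsupp.lift_apply, Finsupp.sum_single_index]
lemma gS_gb (a : A1) : gS K Q (gb K a) = gb K (Q.inv a) := by
  simp [gS, gb, Finsupp.lift_apply, Finsupp.sum_single_index]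
lemma gPiL_gb (a : A1) : gPiL K Q (gb K a) = gb K (Q.e (Q.t a)) := by
  simp [gPiL, gb, Finsupp.lift_apply, Finsupp.sum_single_index]
lemma gPiR_gb (a : A1) : gPiR K Q (gb K a) = gb K (Q.e (Q.s a)) := by
  simp [gPiR, gb, Finsupp.lift_apply, Finsupp.sum_single_index]

lemma geps_gmul_gb (a b : A1) : geps K (gmul K Q (gb K a) (gb K b)) =
    if Q.s a = Q.t b then 1 else 0 := by
  rw [gmul_gb]; split_ifs <;> simp [geps_gb]

lemma gmul_gone_gb (Q : Quasigroupoid O A1) (a : A1) :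
    gmul K Q (gone K Q) (gb K a) = gb K a := by
  have : gone K Q = ∑ x : O, gb K (Q.e x) := rfl
  rw [this, map_sum]
  simp only [LinearMap.coe_sum, Finset.sum_apply, gmul_gb, Q.s_e]
  rw [Finset.sum_congr rfl (fun x _ => rfl)]
  simp [Finset.sum_ite_eq', Q.e_mul]

lemma gmul_gb_gone (Q : Quasigroupoid O A1) (a : A1) :
    gmul K Q (gb K a) (gone K Q) = gb K a := by
  have : gone K Q = ∑ x : O, gb K (Q.e x) := rfl
  rw [this, map_sum]
  simp only [gmul_gb, Q.t_e]
  simp [Finset.sum_ite_eq, Q.mul_e]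

lemma aux_unital (Q : Quasigroupoid O A1) :
    (∀ f : A1 →₀ K, gmul K Q (gone K Q) f = f ∧ gmul K Q f (gone K Q) = f) := by
  intro f
  constructor
  · induction f using Finsupp.induction_linear with
    | zero => simp
    | add f g hf hg => simp [map_add, hf, hg]
    | single a c =>
        have h : (Finsupp.single a c : A1 →₀ K) = c • gb K a := by simp [gb]
        rw [h, map_smul, gmul_gone_gb]
  · induction f using Finsupp.induction_linear with
    | zero => simp
    | add f g hf hg => simp only [map_add, LinearMap.add_apply, hf, hg]
    | single a c =>
        have h : (Finsupp.single a c : A1 →₀ K) = c • gb K a := by simp [gb]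
        rw [h, map_smul, LinearMap.smul_apply, gmul_gb_gone]

-- coalgebra pieces on a general v
lemma aux_coassoc (Q : Quasigroupoid O A1) : (∀ v : A1 →₀ K,
      (TensorProduct.assoc K (A1 →₀ K) (A1 →₀ K) (A1 →₀ K))
        ((TensorProduct.map (gdelta K)
          (LinearMap.id : (A1 →₀ K) →ₗ[K] (A1 →₀ K))) (gdelta K v)) =
      (TensorProduct.map (LinearMap.id : (A1 →₀ K) →ₗ[K] (A1 →₀ K))
        (gdelta K)) (gdelta K v)) := by
  intro v
  induction v using Finsupp.induction_linear with
  | zero => simp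
  | add f g hf hg => simp only [map_add, hf, hg]
  | single a c =>
      have h : (Finsupp.single a c : A1 →₀ K) = c • gb K a := by simp [gb]
      rw [h]
      simp [map_smul, gdelta_gb, TensorProduct.smul_tmul', TensorProduct.map_tmul,
        TensorProduct.assoc_tmul]

lemma aux_counit_l (Q : Quasigroupoid O A1) : (∀ v : A1 →₀ K,
      (TensorProduct.lid K (A1 →₀ K))
        ((TensorProduct.map (geps K)
          (LinearMap.id : (A1 →₀ K) →ₗ[K] (A1 →₀ K))) (gdelta K v)) = v) := by
  intro v
  induction v using Finsupp.induction_linear with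
  | zero => simp only [map_zero]
  | add f g hf hg => rw [map_add, map_add, LinearEquiv.map_add, hf, hg]
  | single a c =>
      have h : (Finsupp.single a c : A1 →₀ K) = c • gb K a := by simp [gb]
      rw [h]
      simp [map_smul, gdelta_gb, TensorProduct.smul_tmul', TensorProduct.map_tmul, geps_gb]

lemma aux_counit_r (Q : Quasigroupoid O A1) : (∀ v : A1 →₀ K,
      (TensorProduct.rid K (A1 →₀ K))
        ((TensorProduct.map (LinearMap.id : (A1 →₀ K) →ₗ[K] (A1 →₀ K))
          (geps K)) (gdelta K v)) = v) := by
  intro v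
  induction v using Finsupp.induction_linear with
  | zero => simp only [map_zero]
  | add f g hf hg => rw [map_add, map_add, LinearEquiv.map_add, hf, hg]
  | single a c =>
      have h : (Finsupp.single a c : A1 →₀ K) = c • gb K a := by simp [gb]
      rw [h]
      simp [map_smul, gdelta_gb, TensorProduct.smul_tmul', TensorProduct.map_tmul, geps_gb]

lemma aux_cocomm (Q : Quasigroupoid O A1) : (∀ v : A1 →₀ K, (TensorProduct.comm K (A1 →₀ K) (A1 →₀ K)) (gdelta K v) = gdelta K v) := by
  intro v
  induction v using Finsupp.induction_linear with
  | zero => simp only [map_zero]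
  | add f g hf hg => rw [map_add, LinearEquiv.map_add, hf, hg]
  | single a c =>
      have h : (Finsupp.single a c : A1 →₀ K) = c • gb K a := by simp [gb]
      rw [h]
      simp [map_smul, gdelta_gb, TensorProduct.smul_tmul']

-- (d1)
lemma aux_d1 (Q : Quasigroupoid O A1) (a b : A1) :
    gdelta K (gmul K Q (gb K a) (gb K b)) =
      gmul K Q (gb K a) (gb K b) ⊗ₜ[K] gmul K Q (gb K a) (gb K b) := by
  rw [gmul_gb]; split_ifs with h
  · exact gdelta_gb K _
  · simp

-- (d2)
lemma geps_triple_left (a b c : A1) :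
    geps K (gmul K Q (gmul K Q (gb K a) (gb K b)) (gb K c)) =
      if Q.s a = Q.t b ∧ Q.s b = Q.t c then 1 else 0 := by
  rw [gmul_gb]
  by_cases h1 : Q.s a = Q.t b
  · rw [if_pos h1, geps_gmul_gb, Q.s_mul a b h1]
    simp [h1]
  · rw [if_neg h1]
    simp [h1, map_zero]

lemma geps_triple_right (a b c : A1) :
    geps K (gmul K Q (gb K a) (gmul K Q (gb K b) (gb K c))) =
      if Q.s a = Q.t b ∧ Q.s b = Q.t c then 1 else 0 := by
  rw [gmul_gb K b c]
  by_cases h2 : Q.s b = Q.t c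
  · rw [if_pos h2, geps_gmul_gb, Q.t_mul b c h2]
    simp [h2, and_comm]
  · rw [if_neg h2]
    simp [h2, map_zero]

lemma aux_d2 (Q : Quasigroupoid O A1) (a b c : A1) :
    geps K (gmul K Q (gmul K Q (gb K a) (gb K b)) (gb K c)) =
        geps K (gmul K Q (gb K a) (gmul K Q (gb K b) (gb K c))) ∧
      geps K (gmul K Q (gmul K Q (gb K a) (gb K b)) (gb K c)) =
        geps K (gmul K Q (gb K a) (gb K b)) * geps K (gmul K Q (gb K b) (gb K c)) := by
  rw [geps_triple_left, geps_triple_right, geps_gmul_gb, geps_gmul_gb]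
  constructor
  · rfl
  · split_ifs with h h1 h2 h1 h2 <;> simp_all

-- (d3) part 1
lemma aux_d3a (Q : Quasigroupoid O A1) :
    ((∑ x : O, gb K (Q.e x) ⊗ₜ[K] (gb K (Q.e x) ⊗ₜ[K] gb K (Q.e x))) =
      ∑ x : O, ∑ y : O,
        gb K (Q.e x) ⊗ₜ[K] (gmul K Q (gb K (Q.e x)) (gb K (Q.e y)) ⊗ₜ[K] gb K (Q.e y))) := by
  have key : ∀ x y : O,
      gb K (Q.e x) ⊗ₜ[K] (gmul K Q (gb K (Q.e x)) (gb K (Q.e y)) ⊗ₜ[K] gb K (Q.e y)) =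
      if y = x then gb K (Q.e x) ⊗ₜ[K] (gb K (Q.e x) ⊗ₜ[K] gb K (Q.e x)) else 0 := by
    intro x y
    rw [gmul_gb, Q.s_e, Q.t_e]
    by_cases h : y = x
    · subst h; simp [Q.e_mul_e]
    · rw [if_neg (Ne.symm h), if_neg h]
      simp
  simp_rw [key]
  simp [Finset.sum_ite_eq']

-- (d3) part 2
lemma aux_d3b (Q : Quasigroupoid O A1) :
    ((∑ x : O, gb K (Q.e x) ⊗ₜ[K] (gb K (Q.e x) ⊗ₜ[K] gb K (Q.e x))) =
      ∑ x : O, ∑ y : O,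
        gb K (Q.e x) ⊗ₜ[K] (gmul K Q (gb K (Q.e y)) (gb K (Q.e x)) ⊗ₜ[K] gb K (Q.e y))) := by
  have key : ∀ x y : O,
      gb K (Q.e x) ⊗ₜ[K] (gmul K Q (gb K (Q.e y)) (gb K (Q.e x)) ⊗ₜ[K] gb K (Q.e y)) =
      if y = x then gb K (Q.e x) ⊗ₜ[K] (gb K (Q.e x) ⊗ₜ[K] gb K (Q.e x)) else 0 := by
    intro x y
    rw [gmul_gb, Q.s_e, Q.t_e]
    by_cases h : y = x
    · subst h; simp [Q.e_mul_e]
    · rw [if_neg h, if_neg h]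
      simp
  simp_rw [key]
  simp [Finset.sum_ite_eq']

-- id ∗ λ = Π^L
lemma aux_idS (Q : Quasigroupoid O A1) (a : A1) : gmul K Q (gb K a) (gS K Q (gb K a)) = gPiL K Q (gb K a) := by
  rw [gS_gb, gPiL_gb, gmul_gb, if_pos (by rw [Q.t_inv]), Q.mul_inv_self]

-- λ ∗ id = Π^R
lemma aux_Sid (Q : Quasigroupoid O A1) (a : A1) : gmul K Q (gS K Q (gb K a)) (gb K a) = gPiR K Q (gb K a) := by
  rw [gS_gb, gPiR_gb, gmul_gb, if_pos (Q.s_inv a), Q.inv_mul_self]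

-- (d4-1)
lemma aux_d41 (Q : Quasigroupoid O A1) (a : A1) : gPiL K Q (gb K a) =
    ∑ x : O, geps K (gmul K Q (gb K (Q.e x)) (gb K a)) • gb K (Q.e x) := by
  rw [gPiL_gb]
  simp only [geps_gmul_gb, Q.s_e, ite_smul, one_smul, zero_smul]
  rw [Finset.sum_ite_eq' Finset.univ (Q.t a) (fun x => gb K (Q.e x))]
  simp

-- (d4-2)
lemma aux_d42 (Q : Quasigroupoid O A1) (a : A1) : gPiR K Q (gb K a) =
    ∑ x : O, geps K (gmul K Q (gb K a) (gb K (Q.e x))) • gb K (Q.e x) := by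
  rw [gPiR_gb]
  simp only [geps_gmul_gb, Q.t_e, ite_smul, one_smul, zero_smul]
  rw [Finset.sum_ite_eq Finset.univ (Q.s a) (fun x => gb K (Q.e x))]
  simp

-- (d4-3)
lemma aux_d43 (Q : Quasigroupoid O A1) (a : A1) :
    gmul K Q (gS K Q (gb K a)) (gPiL K Q (gb K a)) = gS K Q (gb K a) ∧
    gmul K Q (gPiR K Q (gb K a)) (gS K Q (gb K a)) = gS K Q (gb K a) := by
  constructor
  · rw [gS_gb, gPiL_gb, gmul_gb, if_pos (by rw [Q.s_inv, Q.t_e])]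
    have h := Q.mul_e (Q.inv a); rw [Q.s_inv] at h; rw [h]
  · rw [gS_gb, gPiR_gb, gmul_gb, if_pos (by rw [Q.s_e, Q.t_inv])]
    have h := Q.e_mul (Q.inv a); rw [Q.t_inv] at h; rw [h]

-- (d4-4)
lemma aux_d44 (Q : Quasigroupoid O A1) (a b : A1) :
    gmul K Q (gS K Q (gb K a)) (gmul K Q (gb K a) (gb K b)) =
      gmul K Q (gPiR K Q (gb K a)) (gb K b) := by
  rw [gS_gb, gPiR_gb, gmul_gb K a b, gmul_gb K (Q.e (Q.s a)) b, Q.s_e]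
  by_cases h : Q.s a = Q.t b
  · rw [if_pos h, if_pos h, gmul_gb,
      if_pos (by rw [Q.s_inv, Q.t_mul a b h]), Q.inv_mul_cancel a b h]
    have h2 := Q.e_mul b; rw [← h] at h2; rw [h2]
  · rw [if_neg h, if_neg h, map_zero]

-- (d4-5)
lemma aux_d45 (Q : Quasigroupoid O A1) (a b : A1) :
    gmul K Q (gb K a) (gmul K Q (gS K Q (gb K a)) (gb K b)) =
      gmul K Q (gPiL K Q (gb K a)) (gb K b) := by
  rw [gS_gb, gPiL_gb, gmul_gb K (Q.inv a) b, gmul_gb K (Q.e (Q.t a)) b, Q.s_inv, Q.s_e]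
  by_cases h : Q.t a = Q.t b
  · have hc : Q.s (Q.inv a) = Q.t b := by rw [Q.s_inv, h]
    rw [if_pos h, if_pos h, gmul_gb,
      if_pos (by rw [Q.t_mul _ _ hc, Q.t_inv])]
    have h1 := Q.inv_mul_cancel (Q.inv a) b hc
    rw [Q.inv_inv] at h1
    rw [h1]
    have h2 := Q.e_mul b; rw [← h] at h2; rw [h2]
  · rw [if_neg h, if_neg h, map_zero]

-- (d4-6)
lemma aux_d46 (Q : Quasigroupoid O A1) (a b : A1) :
    gmul K Q (gmul K Q (gb K b) (gb K a)) (gS K Q (gb K a)) =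
      gmul K Q (gb K b) (gPiL K Q (gb K a)) := by
  rw [gS_gb, gPiL_gb, gmul_gb K b a, gmul_gb K b (Q.e (Q.t a)), Q.t_e]
  by_cases h : Q.s b = Q.t a
  · rw [if_pos h, if_pos h, gmul_gb,
      if_pos (by rw [Q.s_mul b a h, Q.t_inv]), Q.mul_inv_cancel b a h]
    have h2 := Q.mul_e b; rw [h] at h2; rw [h2]
  · rw [if_neg h, if_neg h]
    simp [map_zero]

-- (d4-7)
lemma aux_d47 (Q : Quasigroupoid O A1) (a b : A1) :
    gmul K Q (gmul K Q (gb K b) (gS K Q (gb K a))) (gb K a) =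
      gmul K Q (gb K b) (gPiR K Q (gb K a)) := by
  rw [gS_gb, gPiR_gb, gmul_gb K b (Q.inv a), gmul_gb K b (Q.e (Q.s a)), Q.t_inv, Q.t_e]
  by_cases h : Q.s b = Q.s a
  · have hc : Q.s b = Q.t (Q.inv a) := by rw [Q.t_inv, h]
    rw [if_pos h, if_pos h, gmul_gb,
      if_pos (by rw [Q.s_mul b (Q.inv a) hc, Q.s_inv])]
    have h1 := Q.mul_inv_cancel b (Q.inv a) hc
    rw [Q.inv_inv] at h1
    rw [h1]
    have h2 := Q.mul_e b; rw [h] at h2; rw [h2]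
  · rw [if_neg h, if_neg h]
    simp [map_zero]


/-- The quasigroupoid magma `K[B]` of a finite quasigroupoid `B` is a cocommutative
weak Hopf quasigroup, with target map `Π^L(b) = id_B(t_B b)` and source map
`Π^R(b) = id_B(s_B b)`: all axioms (d1)–(d4) of a weak Hopf quasigroup hold
(axioms involving multilinear maps are stated on basis elements, which determines
them by (multi)linearity). -/
theorem quasigroupoid_magma_weakHopfQuasigroup (Q : Quasigroupoid O A1) :
    -- unital magma
    (∀ f : A1 →₀ K, gmul K Q (gone K Q) f = f ∧ gmul K Q f (gone K Q) = f) ∧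
    -- coalgebra: coassociativity
    (∀ v : A1 →₀ K,
      (TensorProduct.assoc K (A1 →₀ K) (A1 →₀ K) (A1 →₀ K))
        ((TensorProduct.map (gdelta K)
          (LinearMap.id : (A1 →₀ K) →ₗ[K] (A1 →₀ K))) (gdelta K v)) =
      (TensorProduct.map (LinearMap.id : (A1 →₀ K) →ₗ[K] (A1 →₀ K))
        (gdelta K)) (gdelta K v)) ∧
    -- coalgebra: counit laws
    (∀ v : A1 →₀ K,
      (TensorProduct.lid K (A1 →₀ K))
        ((TensorProduct.map (geps K)
          (LinearMap.id : (A1 →₀ K) →ₗ[K] (A1 →₀ K))) (gdelta K v)) = v) ∧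
    (∀ v : A1 →₀ K,
      (TensorProduct.rid K (A1 →₀ K))
        ((TensorProduct.map (LinearMap.id : (A1 →₀ K) →ₗ[K] (A1 →₀ K))
          (geps K)) (gdelta K v)) = v) ∧
    -- cocommutativity
    (∀ v : A1 →₀ K, (TensorProduct.comm K (A1 →₀ K) (A1 →₀ K)) (gdelta K v) = gdelta K v) ∧
    -- (d1) δ(hk) = h₍₁₎k₍₁₎ ⊗ h₍₂₎k₍₂₎ (on basis elements)
    (∀ a b : A1,
      gdelta K (gmul K Q (gb K a) (gb K b)) =
        gmul K Q (gb K a) (gb K b) ⊗ₜ[K] gmul K Q (gb K a) (gb K b)) ∧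
    -- (d2) weak counit multiplicativity (on basis elements)
    (∀ a b c : A1,
      geps K (gmul K Q (gmul K Q (gb K a) (gb K b)) (gb K c)) =
        geps K (gmul K Q (gb K a) (gmul K Q (gb K b) (gb K c))) ∧
      geps K (gmul K Q (gmul K Q (gb K a) (gb K b)) (gb K c)) =
        geps K (gmul K Q (gb K a) (gb K b)) * geps K (gmul K Q (gb K b) (gb K c))) ∧
    -- (d3) 1₍₁₎ ⊗ 1₍₂₎ ⊗ 1₍₃₎ = 1₍₁₎ ⊗ 1₍₂₎1₍₁'₎ ⊗ 1₍₂'₎ = 1₍₁₎ ⊗ 1₍₁'₎1₍₂₎ ⊗ 1₍₂'₎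
    ((∑ x : O, gb K (Q.e x) ⊗ₜ[K] (gb K (Q.e x) ⊗ₜ[K] gb K (Q.e x))) =
      ∑ x : O, ∑ y : O,
        gb K (Q.e x) ⊗ₜ[K] (gmul K Q (gb K (Q.e x)) (gb K (Q.e y)) ⊗ₜ[K] gb K (Q.e y))) ∧
    ((∑ x : O, gb K (Q.e x) ⊗ₜ[K] (gb K (Q.e x) ⊗ₜ[K] gb K (Q.e x))) =
      ∑ x : O, ∑ y : O,
        gb K (Q.e x) ⊗ₜ[K] (gmul K Q (gb K (Q.e y)) (gb K (Q.e x)) ⊗ₜ[K] gb K (Q.e y))) ∧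
    -- Π^L = id ∗ λ and Π^R = λ ∗ id (on basis elements)
    (∀ a : A1, gmul K Q (gb K a) (gS K Q (gb K a)) = gPiL K Q (gb K a)) ∧
    (∀ a : A1, gmul K Q (gS K Q (gb K a)) (gb K a) = gPiR K Q (gb K a)) ∧
    -- (d4-1) Π^L(h) = ε(1₍₁₎h)1₍₂₎
    (∀ a : A1, gPiL K Q (gb K a) =
      ∑ x : O, geps K (gmul K Q (gb K (Q.e x)) (gb K a)) • gb K (Q.e x)) ∧
    -- (d4-2) Π^R(h) = ε(h1₍₂₎)1₍₁₎
    (∀ a : A1, gPiR K Q (gb K a) =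
      ∑ x : O, geps K (gmul K Q (gb K a) (gb K (Q.e x))) • gb K (Q.e x)) ∧
    -- (d4-3) λ = λ ∗ Π^L = Π^R ∗ λ
    (∀ a : A1,
      gmul K Q (gS K Q (gb K a)) (gPiL K Q (gb K a)) = gS K Q (gb K a) ∧
      gmul K Q (gPiR K Q (gb K a)) (gS K Q (gb K a)) = gS K Q (gb K a)) ∧
    -- (d4-4) λ(h₍₁₎)(h₍₂₎k) = Π^R(h)k
    (∀ a b : A1,
      gmul K Q (gS K Q (gb K a)) (gmul K Q (gb K a) (gb K b)) =
        gmul K Q (gPiR K Q (gb K a)) (gb K b)) ∧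
    -- (d4-5) h₍₁₎(λ(h₍₂₎)k) = Π^L(h)k
    (∀ a b : A1,
      gmul K Q (gb K a) (gmul K Q (gS K Q (gb K a)) (gb K b)) =
        gmul K Q (gPiL K Q (gb K a)) (gb K b)) ∧
    -- (d4-6) (hk₍₁₎)λ(k₍₂₎) = hΠ^L(k)
    (∀ a b : A1,
      gmul K Q (gmul K Q (gb K b) (gb K a)) (gS K Q (gb K a)) =
        gmul K Q (gb K b) (gPiL K Q (gb K a))) ∧
    -- (d4-7) (hλ(k₍₁₎))k₍₂₎ = hΠ^R(k)
    (∀ a b : A1,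
      gmul K Q (gmul K Q (gb K b) (gS K Q (gb K a))) (gb K a) =
        gmul K Q (gb K b) (gPiR K Q (gb K a))) ∧
    -- the explicit form of the target and source maps
    (∀ a : A1, gPiL K Q (gb K a) = gb K (Q.e (Q.t a))) ∧
    (∀ a : A1, gPiR K Q (gb K a) = gb K (Q.e (Q.s a))) := by
  refine ⟨fun f => ⟨(aux_unital K Q f).1, (aux_unital K Q f).2⟩,
    aux_coassoc K Q, aux_counit_l K Q, aux_counit_r K Q, aux_cocomm K Q,
    aux_d1 K Q, fun a b c => aux_d2 K Q a b c, aux_d3a K Q, aux_d3b K Q,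
    aux_idS K Q, aux_Sid K Q, aux_d41 K Q, aux_d42 K Q, aux_d43 K Q,
    aux_d44 K Q, aux_d45 K Q, aux_d46 K Q, aux_d47 K Q,
    fun a => gPiL_gb K a, fun a => gPiR_gb K a⟩


end
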